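/- arXiv:1801.01455 — 4 statements merged into one kernel-verified Lean document; each statement's English description precedes it below -/
import Mathlib

section
/- Let P be a positive integer, δ > 0, ε ≥ 0, μ₀ > 0, and set κ = ε√P/δ. Suppose d ∈ ℝ^P satisfies ‖d‖₂ ≥ δ and the coherence bound μ(d) = P‖d‖_∞²/‖d‖₂² ≤ μ₀, and suppose κ < 1. Then the number N of coordinates j with |d[j]| > ε satisfies N ≥ P(1 − κ²)/μ₀. -/
/-- **Number of distinguishing coordinates.**
Let `κ = ε√P/δ < 1` and `μ₀ > 0`.  If `d ∈ ℝ^P` satisfies `‖d‖₂ ≥ δ` and the coherence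
bound `μ(d) = P‖d‖_∞² / ‖d‖₂² ≤ μ₀`, then the number `N` of coordinates `j` with
`|d j| > ε` satisfies `N ≥ P(1 − κ²)/μ₀`.  (The norm on `Fin P → ℝ` is the sup norm.) -/
theorem distinguishing_coordinates_count (P : ℕ) (hP : 0 < P)
    (δ ε μ₀ : ℝ) (hδ : 0 < δ) (hε : 0 ≤ ε) (hμ₀ : 0 < μ₀)
    (hκ : ε * Real.sqrt P / δ < 1)
    (d : Fin P → ℝ)
    (hd₂ : Real.sqrt (∑ j, d j ^ 2) ≥ δ)
    (hcoh : (P : ℝ) * ‖d‖ ^ 2 / (∑ j, d j ^ 2) ≤ μ₀) :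
    ((Finset.univ.filter fun j => ε < |d j|).card : ℝ) ≥
      (P : ℝ) * (1 - (ε * Real.sqrt P / δ) ^ 2) / μ₀ := by
  set S : ℝ := ∑ j, d j ^ 2 with hSdef
  have hSnn : 0 ≤ S := Finset.sum_nonneg fun j _ => sq_nonneg _
  have hSδ : δ ^ 2 ≤ S := by
    have h1 : δ ^ 2 ≤ Real.sqrt S ^ 2 := pow_le_pow_left₀ hδ.le hd₂ 2
    rwa [Real.sq_sqrt hSnn] at h1
  have hSpos : 0 < S := lt_of_lt_of_le (by positivity) hSδ
  have hcoh' : (P : ℝ) * ‖d‖ ^ 2 ≤ μ₀ * S := by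
    rw [div_le_iff₀ hSpos] at hcoh; linarith
  set F : Finset (Fin P) := Finset.univ.filter fun j => ε < |d j| with hFdef
  set N : ℝ := (F.card : ℝ) with hNdef
  have hNnn : 0 ≤ N := Nat.cast_nonneg _
  -- each coordinate bounded by sup norm
  have hbound : ∀ j : Fin P, d j ^ 2 ≤ ‖d‖ ^ 2 := by
    intro j
    have h1 : |d j| ≤ ‖d‖ := by
      have := norm_le_pi_norm d j
      simpa using this
    calc d j ^ 2 = |d j| ^ 2 := (sq_abs _).symm
      _ ≤ ‖d‖ ^ 2 := pow_le_pow_left₀ (abs_nonneg _) h1 2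
  -- split the sum
  have hsplit : ∑ j ∈ F, d j ^ 2 + ∑ j ∈ Finset.univ.filter (fun j => ¬ ε < |d j|), d j ^ 2 = S :=
    Finset.sum_filter_add_sum_filter_not _ _ _
  have h1 : ∑ j ∈ F, d j ^ 2 ≤ N * ‖d‖ ^ 2 := by
    calc ∑ j ∈ F, d j ^ 2 ≤ F.card • ‖d‖ ^ 2 :=
          Finset.sum_le_card_nsmul _ _ _ (fun j _ => hbound j)
      _ = N * ‖d‖ ^ 2 := by rw [nsmul_eq_mul]
  have h2 : ∑ j ∈ Finset.univ.filter (fun j => ¬ ε < |d j|), d j ^ 2 ≤ (P : ℝ) * ε ^ 2 := by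
    calc ∑ j ∈ Finset.univ.filter (fun j => ¬ ε < |d j|), d j ^ 2
        ≤ (Finset.univ.filter (fun j => ¬ ε < |d j|)).card • ε ^ 2 := by
          refine Finset.sum_le_card_nsmul _ _ _ (fun j hj => ?_)
          simp only [Finset.mem_filter, not_lt] at hj
          calc d j ^ 2 = |d j| ^ 2 := (sq_abs _).symm
            _ ≤ ε ^ 2 := pow_le_pow_left₀ (abs_nonneg _) hj.2 2
      _ = ((Finset.univ.filter (fun j => ¬ ε < |d j|)).card : ℝ) * ε ^ 2 := by rw [nsmul_eq_mul]
      _ ≤ (P : ℝ) * ε ^ 2 := by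
          apply mul_le_mul_of_nonneg_right _ (sq_nonneg _)
          exact_mod_cast Finset.card_le_card (Finset.filter_subset _ _) |>.trans
            (by simp)
  have hNM : S - (P : ℝ) * ε ^ 2 ≤ N * ‖d‖ ^ 2 := by linarith
  -- rewrite κ²
  have hκ2 : (ε * Real.sqrt P / δ) ^ 2 = ε ^ 2 * (P : ℝ) / δ ^ 2 := by
    rw [div_pow, mul_pow, Real.sq_sqrt (Nat.cast_nonneg P)]
  rw [ge_iff_le, hκ2, div_le_iff₀ hμ₀]
  have hδ2 : (0:ℝ) < δ ^ 2 := by positivity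
  have expand : 1 - ε ^ 2 * (P : ℝ) / δ ^ 2 = (δ ^ 2 - ε ^ 2 * P) / δ ^ 2 := by
    field_simp
  rw [expand, ← mul_div_assoc, div_le_iff₀ hδ2]
  have hPnn : (0:ℝ) ≤ (P : ℝ) := Nat.cast_nonneg _
  nlinarith [mul_nonneg (mul_nonneg hδ2.le hNnn) (sub_nonneg.mpr hcoh'),
    mul_nonneg (mul_nonneg hδ2.le hPnn) (sub_nonneg.mpr hNM),
    mul_nonneg (mul_nonneg (sq_nonneg ε) (mul_nonneg hPnn hPnn)) (sub_nonneg.mpr hSδ),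
    hSpos, mul_pos hSpos hδ2]
end

section
/- (Lemma 2) Let P be a positive integer, δ > 0, ε ≥ 0, μ₀ > 0, 0 < p₀ ≤ 1, and set κ = ε√P/δ; assume κ < 1. Let x₁, x₂ ∈ ℝ^P be two points from different clusters, i.e. ‖x₁ − x₂‖₂ ≥ δ and μ(x₁ − x₂) = P‖x₁ − x₂‖_∞²/‖x₁ − x₂‖₂² ≤ μ₀. Let Ω₁, Ω₂ ⊆ {1,…,P} be independent random observation patterns in which each coordinate is observed independently with probability p₀. Then the probability that there exists u ∈ ℝ^P with |x₁[j] − u[j]| ≤ ε/2 for all j ∈ Ω₁ and |x₂[j] − u[j]| ≤ ε/2 for all j ∈ Ω₂ is at most β₀ = 1 − (1 − δ₀)(1 − γ₀), where γ₀ = (e/2)^(−p₀²P/2) and δ₀ = e^(−p₀²P(1−κ²)²/μ₀²). -/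
open MeasureTheory
open scoped ENNReal

lemma bernoulli_prod_pi_avoid (P : ℕ) (q : NNReal) (hq : q ≤ 1) (T : Finset (Fin P)) :
    (((Measure.pi fun _ : Fin P => (PMF.bernoulli q hq).toMeasure).prod
        (Measure.pi fun _ : Fin P => (PMF.bernoulli q hq).toMeasure))
      {ω : (Fin P → Bool) × (Fin P → Bool) |
        ∀ j ∈ T, ¬(ω.1 j = true ∧ ω.2 j = true)}) = (1 - (q : ℝ≥0∞) * q) ^ T.card := by
  set μb := (PMF.bernoulli q hq).toMeasure with hμb
  have hmp := measurePreserving_arrowProdEquivProdArrow Bool Bool (Fin P)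
    (fun _ => μb) (fun _ => μb)
  rw [← hmp.map_eq, MeasurableEquiv.map_apply]
  have hpre : (MeasurableEquiv.arrowProdEquivProdArrow Bool Bool (Fin P)) ⁻¹'
      {ω : (Fin P → Bool) × (Fin P → Bool) | ∀ j ∈ T, ¬(ω.1 j = true ∧ ω.2 j = true)} =
      Set.pi Set.univ (fun j => if j ∈ T then
        {p : Bool × Bool | ¬(p.1 = true ∧ p.2 = true)} else Set.univ) := by
    ext y
    simp only [MeasurableEquiv.arrowProdEquivProdArrow, Equiv.arrowProdEquivProdArrow,
      MeasurableEquiv.coe_mk, Equiv.coe_fn_mk, Set.mem_preimage, Set.mem_setOf_eq,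
      Set.mem_pi, Set.mem_univ, forall_true_left]
    constructor
    · intro h j
      split_ifs with hj
      · exact h j hj
      · trivial
    · intro h j hj
      have := h j
      rw [if_pos hj] at this
      exact this
  rw [hpre, Measure.pi_pi]
  have hfac : ∀ j : Fin P, (μb.prod μb) (if j ∈ T then
      {p : Bool × Bool | ¬(p.1 = true ∧ p.2 = true)} else Set.univ) =
      if j ∈ T then (1 - (q : ℝ≥0∞) * q) else 1 := by
    intro j
    split_ifs with hj
    · have hset : {p : Bool × Bool | ¬(p.1 = true ∧ p.2 = true)} =
          (({true} : Set Bool) ×ˢ ({true} : Set Bool))ᶜ := by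
        ext ⟨a, b⟩; cases a <;> cases b <;> simp
      rw [hset, prob_compl_eq_one_sub ((measurableSet_singleton true).prod
        (measurableSet_singleton true)), Measure.prod_prod]
      have h1 : μb {true} = q := by
        rw [hμb, PMF.toMeasure_apply_singleton _ _ (measurableSet_singleton true)]
        exact PMF.bernoulli_apply hq true
      rw [h1]
    · simp
  simp_rw [hfac]
  rw [Finset.prod_ite_mem Finset.univ T (fun _ => (1 - (q : ℝ≥0∞) * q)), Finset.univ_inter,
    Finset.prod_const]


set_option maxHeartbeats 1000000 in
/-- **Lemma 2: a common center for two points from different clusters is unlikely.**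
Let `κ = ε√P/δ < 1`, and let `x₁, x₂ ∈ ℝ^P` be points from different clusters, i.e.
`‖x₁ − x₂‖₂ ≥ δ` and coherence `μ(x₁ − x₂) = P‖x₁ − x₂‖_∞²/‖x₁ − x₂‖₂² ≤ μ₀`.  Let
`Ω₁, Ω₂` be independent random observation patterns, each coordinate observed
independently with probability `p₀`.  Then the probability that some `u ∈ ℝ^P` satisfies
`|x₁ j − u j| ≤ ε/2` on `Ω₁` and `|x₂ j − u j| ≤ ε/2` on `Ω₂` is at most
`β₀ = 1 − (1 − δ₀)(1 − γ₀)`, where `γ₀ = (e/2)^(−p₀²P/2)` and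
`δ₀ = exp(−p₀²P(1 − κ²)²/μ₀²)`. -/
theorem different_clusters_common_center_prob_bound (P : ℕ) (hP : 0 < P)
    (δ ε μ₀ p₀ : ℝ) (hδ : 0 < δ) (hε : 0 ≤ ε) (hμ₀ : 0 < μ₀)
    (hp0 : 0 < p₀) (hp1 : p₀ ≤ 1)
    (hκ : ε * Real.sqrt P / δ < 1)
    (x₁ x₂ : Fin P → ℝ)
    (hsep : Real.sqrt (∑ j, (x₁ j - x₂ j) ^ 2) ≥ δ)
    (hcoh : (P : ℝ) * ‖x₁ - x₂‖ ^ 2 / (∑ j, (x₁ j - x₂ j) ^ 2) ≤ μ₀) :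
    (((Measure.pi fun _ : Fin P =>
          (PMF.bernoulli (Real.toNNReal p₀) (Real.toNNReal_le_one.mpr hp1)).toMeasure).prod
        (Measure.pi fun _ : Fin P =>
          (PMF.bernoulli (Real.toNNReal p₀) (Real.toNNReal_le_one.mpr hp1)).toMeasure))
        {ω : (Fin P → Bool) × (Fin P → Bool) |
          ∃ u : Fin P → ℝ,
            (∀ j, ω.1 j = true → |x₁ j - u j| ≤ ε / 2) ∧
            (∀ j, ω.2 j = true → |x₂ j - u j| ≤ ε / 2)}) ≤
      ENNReal.ofReal
        (1 - (1 - Real.exp (-(p₀ ^ 2 * (P : ℝ) * (1 - (ε * Real.sqrt P / δ) ^ 2) ^ 2 / μ₀ ^ 2))) *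
          (1 - (Real.exp 1 / 2) ^ (-(p₀ ^ 2 * (P : ℝ) / 2)))) := by
  classical
  set κ : ℝ := ε * Real.sqrt P / δ with hκdef
  set S : ℝ := ∑ j, (x₁ j - x₂ j) ^ 2 with hSdef
  have hκ0 : 0 ≤ κ := div_nonneg (mul_nonneg hε (Real.sqrt_nonneg _)) hδ.le
  have hκ1 : κ ^ 2 < 1 := by nlinarith
  have hS0 : 0 ≤ S := Finset.sum_nonneg fun j _ => sq_nonneg _
  have hSδ : δ ^ 2 ≤ S := by
    have h1 : Real.sqrt S ^ 2 = S := Real.sq_sqrt hS0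
    nlinarith [Real.sqrt_nonneg S]
  have hSpos : 0 < S := lt_of_lt_of_le (by positivity) hSδ
  have hcoh' : (P : ℝ) * ‖x₁ - x₂‖ ^ 2 ≤ μ₀ * S := by
    rw [div_le_iff₀ hSpos] at hcoh; linarith
  have hnorm : ∀ j, (x₁ j - x₂ j) ^ 2 ≤ ‖x₁ - x₂‖ ^ 2 := by
    intro j
    have h1 : |x₁ j - x₂ j| ≤ ‖x₁ - x₂‖ := by
      have := norm_le_pi_norm (x₁ - x₂) j
      simpa [Real.norm_eq_abs] using this
    nlinarith [abs_nonneg (x₁ j - x₂ j), sq_abs (x₁ j - x₂ j)]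
  have hμ1 : 1 ≤ μ₀ := by
    have hSle : S ≤ (P : ℝ) * ‖x₁ - x₂‖ ^ 2 := by
      calc S ≤ ∑ _j : Fin P, ‖x₁ - x₂‖ ^ 2 := Finset.sum_le_sum fun j _ => hnorm j
        _ = (P : ℝ) * ‖x₁ - x₂‖ ^ 2 := by
            rw [Finset.sum_const, Finset.card_univ, Fintype.card_fin, nsmul_eq_mul]
    nlinarith
  set T : Finset (Fin P) := Finset.univ.filter (fun j => ε < |x₁ j - x₂ j|) with hTdef
  -- lower bound on the cardinality of T
  have hεP : ε ^ 2 * P = κ ^ 2 * δ ^ 2 := by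
    have h1 : κ * δ = ε * Real.sqrt P := by rw [hκdef, div_mul_cancel₀ _ hδ.ne']
    have h2 : Real.sqrt P ^ 2 = P := Real.sq_sqrt (Nat.cast_nonneg P)
    linear_combination (-(κ * δ + ε * Real.sqrt P)) * h1 - ε ^ 2 * h2
  have hcompl : ∑ j ∈ Tᶜ, (x₁ j - x₂ j) ^ 2 ≤ ε ^ 2 * P := by
    calc ∑ j ∈ Tᶜ, (x₁ j - x₂ j) ^ 2 ≤ ∑ _j ∈ Tᶜ, ε ^ 2 := by
          refine Finset.sum_le_sum fun j hj => ?_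
          have h1 : ¬ ε < |x₁ j - x₂ j| := by
            have := Finset.mem_compl.mp hj
            simpa [hTdef] using this
          nlinarith [sq_abs (x₁ j - x₂ j), abs_nonneg (x₁ j - x₂ j)]
      _ = (Tᶜ.card : ℝ) * ε ^ 2 := by rw [Finset.sum_const, nsmul_eq_mul]
      _ ≤ (P : ℝ) * ε ^ 2 := by
          have h1 : (Tᶜ.card : ℝ) ≤ (P : ℝ) := by
            have := Finset.card_le_univ Tᶜ
            have h2 : Fintype.card (Fin P) = P := Fintype.card_fin P
            exact_mod_cast h2 ▸ this
          nlinarith [sq_nonneg ε]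
      _ = ε ^ 2 * P := by ring
  have hsplit : ∑ j ∈ T, (x₁ j - x₂ j) ^ 2 + ∑ j ∈ Tᶜ, (x₁ j - x₂ j) ^ 2 = S :=
    Finset.sum_add_sum_compl T _
  have hTlow : (1 - κ ^ 2) * S ≤ ∑ j ∈ T, (x₁ j - x₂ j) ^ 2 := by
    have h3 : κ ^ 2 * δ ^ 2 ≤ κ ^ 2 * S := mul_le_mul_of_nonneg_left hSδ (sq_nonneg κ)
    have e : (1 - κ ^ 2) * S = S - κ ^ 2 * S := by ring
    rw [e]
    linarith [hsplit, hcompl, hεP, h3]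
  have hTup : (P : ℝ) * ∑ j ∈ T, (x₁ j - x₂ j) ^ 2 ≤ (T.card : ℝ) * (μ₀ * S) := by
    rw [Finset.mul_sum]
    calc ∑ j ∈ T, (P : ℝ) * (x₁ j - x₂ j) ^ 2 ≤ ∑ _j ∈ T, μ₀ * S :=
          Finset.sum_le_sum fun j _ => le_trans
            (mul_le_mul_of_nonneg_left (hnorm j) (Nat.cast_nonneg P)) hcoh'
      _ = (T.card : ℝ) * (μ₀ * S) := by rw [Finset.sum_const, nsmul_eq_mul]
  have hPpos : (0 : ℝ) < P := by exact_mod_cast hP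
  have hcard : (1 - κ ^ 2) * P / μ₀ ≤ (T.card : ℝ) := by
    rw [div_le_iff₀ hμ₀]
    nlinarith [mul_le_mul_of_nonneg_left hTlow hPpos.le]
  -- the event forces every coordinate of T to be unobserved in at least one pattern
  have hsub : {ω : (Fin P → Bool) × (Fin P → Bool) |
        ∃ u : Fin P → ℝ,
          (∀ j, ω.1 j = true → |x₁ j - u j| ≤ ε / 2) ∧
          (∀ j, ω.2 j = true → |x₂ j - u j| ≤ ε / 2)} ⊆
      {ω : (Fin P → Bool) × (Fin P → Bool) | ∀ j ∈ T, ¬(ω.1 j = true ∧ ω.2 j = true)} := by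
    rintro ω ⟨u, h1, h2⟩ j hj ⟨ha, hb⟩
    have hjT : ε < |x₁ j - x₂ j| := by simpa [hTdef] using hj
    have e1 := h1 j ha
    have e2 := h2 j hb
    have e3 : |(x₁ j - u j) - (x₂ j - u j)| ≤ |x₁ j - u j| + |x₂ j - u j| := abs_sub _ _
    have e4 : x₁ j - x₂ j = (x₁ j - u j) - (x₂ j - u j) := by ring
    rw [← e4] at e3
    linarith
  refine le_trans (measure_mono hsub) ?_
  rw [bernoulli_prod_pi_avoid P (Real.toNNReal p₀) (Real.toNNReal_le_one.mpr hp1) T]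
  have hq2 : (1 : ℝ≥0∞) - ((Real.toNNReal p₀ : ℝ≥0∞)) * (Real.toNNReal p₀ : ℝ≥0∞) =
      ENNReal.ofReal (1 - p₀ ^ 2) := by
    change (1 : ℝ≥0∞) - ENNReal.ofReal p₀ * ENNReal.ofReal p₀ = _
    rw [← ENNReal.ofReal_mul hp0.le, ← ENNReal.ofReal_one,
      ← ENNReal.ofReal_sub _ (by positivity)]
    congr 1; ring
  have hp2 : (0 : ℝ) ≤ 1 - p₀ ^ 2 := by nlinarith
  rw [hq2, ← ENNReal.ofReal_pow hp2]
  refine ENNReal.ofReal_le_ofReal ?_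
  -- real-number estimate
  set n : ℕ := T.card with hn
  set γ₀ : ℝ := (Real.exp 1 / 2) ^ (-(p₀ ^ 2 * (P : ℝ) / 2)) with hγdef
  set δ₀ : ℝ := Real.exp (-(p₀ ^ 2 * (P : ℝ) * (1 - κ ^ 2) ^ 2 / μ₀ ^ 2)) with hδdef
  have hγ0 : 0 ≤ γ₀ := Real.rpow_nonneg (by positivity) _
  have hδ1 : δ₀ ≤ 1 := by
    rw [hδdef, Real.exp_le_one_iff]
    have : (0:ℝ) ≤ p₀ ^ 2 * (P : ℝ) * (1 - κ ^ 2) ^ 2 / μ₀ ^ 2 := by positivity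
    linarith
  have key : (1 - p₀ ^ 2) ^ n ≤ δ₀ := by
    have e1 : (1 - p₀ ^ 2) ^ n ≤ Real.exp (-(p₀ ^ 2)) ^ n := by
      refine pow_le_pow_left₀ hp2 ?_ n
      nlinarith [Real.add_one_le_exp (-(p₀ ^ 2))]
    have e2 : Real.exp (-(p₀ ^ 2)) ^ n = Real.exp ((n : ℝ) * (-(p₀ ^ 2))) :=
      (Real.exp_nat_mul _ n).symm
    have e3 : Real.exp ((n : ℝ) * (-(p₀ ^ 2))) ≤
        Real.exp (-(p₀ ^ 2 * ((1 - κ ^ 2) * P / μ₀))) := by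
      refine Real.exp_le_exp.mpr ?_
      have := mul_le_mul_of_nonneg_left hcard (sq_nonneg p₀)
      nlinarith
    have e4 : Real.exp (-(p₀ ^ 2 * ((1 - κ ^ 2) * P / μ₀))) ≤ δ₀ := by
      rw [hδdef]
      refine Real.exp_le_exp.mpr ?_
      set a : ℝ := (1 - κ ^ 2) / μ₀ with hadef
      have ha0 : 0 ≤ a := div_nonneg (by linarith) hμ₀.le
      have ha1 : a ≤ 1 := by rw [hadef, div_le_one hμ₀]; nlinarith
      have r1 : p₀ ^ 2 * (P : ℝ) * (1 - κ ^ 2) ^ 2 / μ₀ ^ 2 = p₀ ^ 2 * (P : ℝ) * a ^ 2 := by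
        rw [hadef]; field_simp; try ring
      have r2 : p₀ ^ 2 * ((1 - κ ^ 2) * (P : ℝ) / μ₀) = p₀ ^ 2 * (P : ℝ) * a := by
        rw [hadef]; field_simp; try ring
      rw [r1, r2]
      have h6 : a ^ 2 ≤ a := by nlinarith
      have hc : (0 : ℝ) ≤ p₀ ^ 2 * (P : ℝ) := by positivity
      nlinarith [mul_le_mul_of_nonneg_left h6 hc]
    calc (1 - p₀ ^ 2) ^ n ≤ Real.exp (-(p₀ ^ 2)) ^ n := e1
      _ = Real.exp ((n : ℝ) * (-(p₀ ^ 2))) := e2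
      _ ≤ Real.exp (-(p₀ ^ 2 * ((1 - κ ^ 2) * P / μ₀))) := e3
      _ ≤ δ₀ := e4
  nlinarith [mul_nonneg hγ0 (by linarith : (0:ℝ) ≤ 1 - δ₀)]
end

section
/- Let M ≥ 3 be an integer and 0 < β₀ ≤ 1. If log β₀ ≤ 1/(M−1) + (2/(M−2))·log(1/(M−1)), then η₀ = Σ_{i=1}^{M−1} (M choose i)² β₀^(i(M−i)) ≤ M³ β₀^(M−1). -/
open Real Finset

namespace Eta0Aux

noncomputable def F (A : ℝ) (n : ℕ) : ℝ := Real.log (A + n) - Real.log (A - n)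

noncomputable def dd (A : ℝ) (j : ℕ) : ℝ := F A (j+1) - F A j

lemma F_sum (A : ℝ) (n : ℕ) : F A n = ∑ j ∈ Finset.range n, dd A j := by
  induction n with
  | zero => simp [F]
  | succ n ih => rw [Finset.sum_range_succ, ← ih]; simp [dd]

lemma dd_step (A : ℝ) (K : ℕ) (hA : (K:ℝ) + 4 ≤ A) {j : ℕ} (hj : j + 2 ≤ K) :
    dd A j ≤ dd A (j+1) := by
  have hjK : ((j:ℝ) + 2) ≤ (K:ℝ) := by exact_mod_cast hj
  have hj0 : (0:ℝ) ≤ (j:ℝ) := Nat.cast_nonneg j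
  set p : ℝ := A + ((j:ℝ)+1) with hp
  set q : ℝ := A - ((j:ℝ)+1) with hq
  have hq3 : (3:ℝ) ≤ q := by simp only [hq]; linarith
  have hqp : q ≤ p := by simp only [hp, hq]; linarith
  have hq0 : (0:ℝ) < q := by linarith
  have hp0 : (0:ℝ) < p := by linarith
  have hq1 : (0:ℝ) < q - 1 := by linarith
  have hq1' : (0:ℝ) < q + 1 := by linarith
  have hp1 : (0:ℝ) < p - 1 := by linarith
  have hp1' : (0:ℝ) < p + 1 := by linarith
  have e0 : dd A j = (Real.log p - Real.log q) - (Real.log (p-1) - Real.log (q+1)) := by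
    simp only [dd, F, hp, hq]; push_cast; ring_nf
  have e1 : dd A (j+1) = (Real.log (p+1) - Real.log (q-1)) - (Real.log p - Real.log q) := by
    simp only [dd, F, hp, hq]; push_cast; ring_nf
  rw [e0, e1]
  have hx : (0:ℝ) < p*p*((q+1)*(q-1)) := by positivity
  have key : Real.log (p*p*((q+1)*(q-1))) ≤ Real.log ((p-1)*(p+1)*(q*q)) := by
    apply Real.log_le_log hx
    nlinarith
  rw [Real.log_mul (by positivity) (by positivity), Real.log_mul (by positivity) (by positivity),
      Real.log_mul (by positivity) (by positivity), Real.log_mul (by positivity) (by positivity),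
      Real.log_mul (by positivity) (by positivity), Real.log_mul (by positivity) (by positivity)]
    at key
  linarith

lemma dd_mono (A : ℝ) (K : ℕ) (hA : (K:ℝ) + 4 ≤ A) :
    ∀ {a b : ℕ}, a ≤ b → b + 1 ≤ K → dd A a ≤ dd A b := by
  intro a b
  induction b with
  | zero => intro h _; interval_cases a; rfl
  | succ n ih =>
    intro hab hbK
    rcases Nat.lt_or_ge a (n+1) with h | h
    · exact le_trans (ih (by omega) (by omega)) (dd_step A K hA (by omega))
    · have : a = n + 1 := by omega
      subst this; rfl

lemma slope (A : ℝ) (K k : ℕ) (hA : (K:ℝ) + 4 ≤ A) (hk1 : 1 ≤ k) (hkK : k ≤ K) :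
    (K:ℝ) * F A k ≤ (k:ℝ) * F A K := by
  have key1 : ∑ j ∈ Finset.range k, dd A j ≤ (Finset.range k).card • dd A (k-1) := by
    apply Finset.sum_le_card_nsmul
    intro j hj
    simp only [Finset.mem_range] at hj
    exact dd_mono A K hA (by omega) (by omega)
  have key2 : (Finset.Ico k K).card • dd A (k-1) ≤ ∑ j ∈ Finset.Ico k K, dd A j := by
    apply Finset.card_nsmul_le_sum
    intro j hj
    simp only [Finset.mem_Ico] at hj
    exact dd_mono A K hA (by omega) (by omega)
  rw [Finset.card_range, nsmul_eq_mul] at key1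
  rw [Nat.card_Ico, nsmul_eq_mul] at key2
  have hFk : F A k = ∑ j ∈ Finset.range k, dd A j := F_sum A k
  have hFK : F A K = F A k + ∑ j ∈ Finset.Ico k K, dd A j := by
    rw [F_sum A K, F_sum A k, Finset.sum_Ico_eq_sub _ hkK]; ring
  have hcast : ((K - k : ℕ) : ℝ) = (K:ℝ) - (k:ℝ) := by
    rw [Nat.cast_sub hkK]
  rw [hcast] at key2
  have hk0 : (0:ℝ) ≤ (k:ℝ) := Nat.cast_nonneg k
  have hKk : (0:ℝ) ≤ (K:ℝ) - (k:ℝ) := by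
    have : (k:ℝ) ≤ (K:ℝ) := by exact_mod_cast hkK
    linarith
  nlinarith [mul_le_mul_of_nonneg_left key2 hk0, mul_le_mul_of_nonneg_left key1 hKk]

lemma log_three_halves_ub : Real.log (3/2) ≤ 0.4105 := by
  rw [Real.log_le_iff_le_exp (by norm_num)]
  have h1 : (1:ℝ) + 0.4105/32 ≤ Real.exp (0.4105/32) := by
    linarith [Real.add_one_le_exp ((0.4105:ℝ)/32)]
  have h2 : ((1:ℝ) + 0.4105/32)^(32:ℕ) ≤ (Real.exp (0.4105/32))^(32:ℕ) := by
    apply pow_le_pow_left₀ (by norm_num) h1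
  have h3 : (Real.exp (0.4105/32))^(32:ℕ) = Real.exp 0.4105 := by
    rw [← Real.exp_nat_mul]; norm_num
  have h4 : (3/2:ℝ) ≤ ((1:ℝ) + 0.4105/32)^(32:ℕ) := by norm_num
  linarith

lemma log_sqrt_bound {x : ℝ} (hx : 0 < x) : Real.log x ≤ 2 * Real.sqrt x / Real.exp 1 := by
  have hs : 0 < Real.sqrt x := Real.sqrt_pos.mpr hx
  have h1 : Real.log (Real.sqrt x / Real.exp 1) ≤ Real.sqrt x / Real.exp 1 - 1 :=
    Real.log_le_sub_one_of_pos (by positivity)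
  rw [Real.log_div (ne_of_gt hs) (ne_of_gt (Real.exp_pos 1)), Real.log_exp,
      Real.log_sqrt hx.le] at h1
  have h2 : 2 * Real.sqrt x / Real.exp 1 = 2 * (Real.sqrt x / Real.exp 1) := by ring
  rw [h2]; linarith

lemma star_ge8 (m : ℝ) (hm : 8 ≤ m) :
    2 * Real.log (m-1) / (m-2) + (m-3)/(m-1) ≤ 2 * Real.log 2 := by
  set x : ℝ := m - 1 with hx
  have hx7 : (7:ℝ) ≤ x := by simp only [hx]; linarith
  have hx0 : (0:ℝ) < x := by linarith
  set s : ℝ := Real.sqrt x with hs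
  have hs0 : (0:ℝ) ≤ s := Real.sqrt_nonneg x
  have hs2 : s^2 = x := Real.sq_sqrt hx0.le
  have hlogx : Real.log x ≤ 2 * s / Real.exp 1 := log_sqrt_bound hx0
  have he : (2.7182818283:ℝ) < Real.exp 1 := Real.exp_one_gt_d9
  have hl2 : (0.6931471803:ℝ) < Real.log 2 := Real.log_two_gt_d9
  have he0 : (0:ℝ) < Real.exp 1 := Real.exp_pos 1
  have hx1 : (0:ℝ) < x - 1 := by linarith
  have hs26 : (2.645:ℝ) ≤ s := by nlinarith [hs2]
  have key0 : 4 * s * x ≤ 2.7182818283 * (x-1) * ((2*0.6931471803 - 1)*x + 2) := by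
    nlinarith [hs2, hs26, sq_nonneg (s - 2.645), sq_nonneg (s*s - 2.645*s),
      mul_nonneg (sub_nonneg.2 hs26) (sq_nonneg s),
      mul_nonneg (mul_nonneg (sub_nonneg.2 hs26) (sub_nonneg.2 hs26)) hs0,
      mul_nonneg (mul_nonneg hs0 hs0) hs0]
  have key : 4 * s * x ≤ Real.exp 1 * (x-1) * ((2*Real.log 2 - 1)*x + 2) := by
    have t1 : ((2*0.6931471803 - 1):ℝ)*x + 2 ≤ (2*Real.log 2 - 1)*x + 2 := by nlinarith
    have t0 : (0:ℝ) ≤ (2*0.6931471803 - 1:ℝ)*x + 2 := by nlinarith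
    calc 4 * s * x ≤ 2.7182818283 * (x-1) * ((2*0.6931471803 - 1)*x + 2) := key0
      _ ≤ Real.exp 1 * (x-1) * ((2*0.6931471803 - 1)*x + 2) := by
          nlinarith [mul_le_mul_of_nonneg_right
            (mul_le_mul_of_nonneg_right he.le hx1.le) t0]
      _ ≤ Real.exp 1 * (x-1) * ((2*Real.log 2 - 1)*x + 2) := by
          nlinarith [mul_le_mul_of_nonneg_left t1
            (mul_nonneg he0.le hx1.le)]
  have hlog2 : 2 * Real.log x / (x-1) ≤ 4 * s / (Real.exp 1 * (x-1)) := by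
    rw [div_le_div_iff₀ hx1 (by positivity)]
    have h5 := mul_le_mul_of_nonneg_right hlogx (le_of_lt hx1)
    calc 2 * Real.log x * (Real.exp 1 * (x-1))
        = (Real.log x * (x-1)) * (2 * Real.exp 1) := by ring
      _ ≤ ((2 * s / Real.exp 1) * (x-1)) * (2 * Real.exp 1) := by
          apply mul_le_mul_of_nonneg_right h5 (by positivity)
      _ = 4 * s * (x - 1) := by field_simp; ring
  have hfin : 4 * s / (Real.exp 1 * (x-1)) ≤ 2*Real.log 2 - 1 + 2/x := by
    rw [div_le_iff₀ (by positivity)]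
    have h2 : (2*Real.log 2 - 1 + 2/x) * (Real.exp 1 * (x-1))
        = Real.exp 1 * (x-1) * ((2*Real.log 2 - 1)*x + 2) / x := by
      field_simp
    rw [h2, le_div_iff₀ hx0]
    nlinarith [key]
  have e1 : (m-3)/(m-1) = 1 - 2/x := by
    rw [hx, eq_sub_iff_add_eq, ← add_div, div_eq_one_iff_eq (by linarith)]; ring
  have e2 : x - 1 = m - 2 := by rw [hx]; ring
  rw [e1, ← e2]
  linarith

lemma star7 : 2 * Real.log (7-1) / (7-2) + ((7:ℝ)-3)/(7-1) ≤ 2 * Real.log 2 := by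
  have l6 : Real.log 6 = Real.log 2 + Real.log 3 := by
    have h := Real.log_mul (show (2:ℝ) ≠ 0 by norm_num) (show (3:ℝ) ≠ 0 by norm_num)
    norm_num at h
    exact h
  have l3 : Real.log 3 = Real.log 2 + Real.log (3/2) := by
    have h := Real.log_mul (show (2:ℝ) ≠ 0 by norm_num) (show (3/2:ℝ) ≠ 0 by norm_num)
    norm_num at h
    exact h
  have h1 := log_three_halves_ub
  have h2 : (0.6931471803:ℝ) < Real.log 2 := Real.log_two_gt_d9
  have e1 : (7:ℝ) - 1 = 6 := by norm_num
  have e2 : (7:ℝ) - 2 = 5 := by norm_num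
  have e3 : (7:ℝ) - 3 = 4 := by norm_num
  rw [e1, e2, e3, l6, l3]
  linarith

end Eta0Aux

open Eta0Aux

set_option maxHeartbeats 2000000 in
/-- **Simplified bound on the failure probability `η₀` for `K = 2`.**
Let `M ≥ 3` and `0 < β₀ ≤ 1`.  If `log β₀ ≤ 1/(M−1) + (2/(M−2))·log(1/(M−1))`, then
`η₀ = ∑_{i=1}^{M−1} (M choose i)² β₀^(i(M−i)) ≤ M³ β₀^(M−1)`. -/
theorem eta0_approx_bound (M : ℕ) (hM : 3 ≤ M) (β₀ : ℝ) (hβ0 : 0 < β₀) (hβ1 : β₀ ≤ 1)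
    (hlog : Real.log β₀ ≤
      1 / ((M : ℝ) - 1) + (2 / ((M : ℝ) - 2)) * Real.log (1 / ((M : ℝ) - 1))) :
    ∑ i ∈ Finset.Icc 1 (M - 1), (M.choose i : ℝ) ^ 2 * β₀ ^ (i * (M - i)) ≤
      (M : ℝ) ^ 3 * β₀ ^ (M - 1) := by
  have hβpow : ∀ (n : ℕ) (c : ℝ), Real.log β₀ ≤ c → β₀ ^ n ≤ Real.exp ((n:ℝ) * c) := by
    intro n c hc
    have h : β₀^n = Real.exp ((n:ℝ) * Real.log β₀) := by
      rw [Real.exp_nat_mul, Real.exp_log hβ0]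
    rw [h]
    exact Real.exp_le_exp.2 (mul_le_mul_of_nonneg_left hc (Nat.cast_nonneg n))
  rcases Nat.lt_or_ge M 7 with hM7 | hM7
  · -- small cases M = 3, 4, 5, 6
    interval_cases M
    · -- M = 3
      rw [show Finset.Icc 1 (3-1) = {1, 2} by decide]
      simp [Finset.sum_insert, Finset.mem_insert]
      push_cast
      nlinarith [pow_nonneg hβ0.le 2]
    · -- M = 4
      norm_num at hlog
      rw [one_div, Real.log_inv] at hlog
      have hc : Real.log β₀ ≤ 1/3 - Real.log 3 := by linarith
      have h3 : β₀^3 ≤ Real.exp 1 / 27 := by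
        have h := hβpow 3 (1/3 - Real.log 3) hc
        have e : ((3:ℕ):ℝ) * (1/3 - Real.log 3) = 1 - ((3:ℕ):ℝ)*Real.log 3 := by
          push_cast; ring
        rw [e, Real.exp_sub, Real.exp_nat_mul, Real.exp_log (by norm_num : (0:ℝ) < 3)] at h
        norm_num at h
        exact h
      have hβ89 : β₀ ≤ 8/9 := by
        by_contra hcon
        push_neg at hcon
        have hlt : (8/9:ℝ)^3 < β₀^3 := by
          apply pow_lt_pow_left₀ hcon (by norm_num) (by norm_num)
        have he := Real.exp_one_lt_d9
        nlinarith [h3]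
      rw [show Finset.Icc 1 (4-1) = {1, 2, 3} by decide]
      simp [Finset.sum_insert, Finset.mem_insert]
      norm_num [show Nat.choose 4 2 = 6 by decide]
      push_cast
      nlinarith [mul_le_mul_of_nonneg_right hβ89 (pow_nonneg hβ0.le 3),
        pow_nonneg hβ0.le 3]
    · -- M = 5
      norm_num at hlog
      rw [one_div, Real.log_inv] at hlog
      have hc : Real.log β₀ ≤ 1/4 - (2/3)*Real.log 4 := by linarith
      have h12 : β₀^12 ≤ (Real.exp 1)^3 / 65536 := by
        have h := hβpow 12 (1/4 - (2/3)*Real.log 4) hc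
        have e : ((12:ℕ):ℝ) * (1/4 - (2/3)*Real.log 4)
            = ((3:ℕ):ℝ)*1 - ((8:ℕ):ℝ)*Real.log 4 := by push_cast; ring
        rw [e, Real.exp_sub, Real.exp_nat_mul, Real.exp_nat_mul,
            Real.exp_log (by norm_num : (0:ℝ) < 4)] at h
        norm_num at h ⊢
        exact h
      have hb : β₀^2 ≤ 3/8 := by
        by_contra hcon
        push_neg at hcon
        have hlt : (3/8:ℝ)^6 < (β₀^2)^6 := by
          apply pow_lt_pow_left₀ hcon (by norm_num) (by norm_num)
        rw [← pow_mul] at hlt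
        have he := Real.exp_one_lt_d9
        have he3 : (Real.exp 1)^3 < 2.7182818286^3 := by
          apply pow_lt_pow_left₀ he (Real.exp_pos 1).le (by norm_num)
        nlinarith [h12]
      rw [show Finset.Icc 1 (5-1) = {1, 2, 3, 4} by decide]
      simp [Finset.sum_insert, Finset.mem_insert]
      norm_num [show Nat.choose 5 2 = 10 by decide, show Nat.choose 5 3 = 10 by decide]
      push_cast
      nlinarith [mul_le_mul_of_nonneg_left hb (pow_nonneg hβ0.le 4),
        pow_nonneg hβ0.le 4]
    · -- M = 6
      norm_num at hlog
      rw [one_div, Real.log_inv] at hlog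
      have hc : Real.log β₀ ≤ 1/5 - (2/4)*Real.log 5 := by push_cast at hlog ⊢; linarith
      have h10 : β₀^10 ≤ (Real.exp 1)^2 / 3125 := by
        have h := hβpow 10 (1/5 - (2/4)*Real.log 5) hc
        have e : ((10:ℕ):ℝ) * (1/5 - (2/4)*Real.log 5)
            = ((2:ℕ):ℝ)*1 - ((5:ℕ):ℝ)*Real.log 5 := by push_cast; ring
        rw [e, Real.exp_sub, Real.exp_nat_mul, Real.exp_nat_mul,
            Real.exp_log (by norm_num : (0:ℝ) < 5)] at h
        norm_num at h ⊢
        exact h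
      have hb : β₀ ≤ 11/20 := by
        by_contra hcon
        push_neg at hcon
        have hlt : (11/20:ℝ)^10 < β₀^10 := by
          apply pow_lt_pow_left₀ hcon (by norm_num) (by norm_num)
        have he := Real.exp_one_lt_d9
        have he2 : (Real.exp 1)^2 < 2.7182818286^2 := by
          apply pow_lt_pow_left₀ he (Real.exp_pos 1).le (by norm_num)
        nlinarith [h10]
      have h3 : β₀^3 ≤ (11/20:ℝ)^3 := by
        apply pow_le_pow_left₀ hβ0.le hb
      have h4 : β₀^4 ≤ (11/20:ℝ)^4 := by
        apply pow_le_pow_left₀ hβ0.le hb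
      rw [show Finset.Icc 1 (6-1) = {1, 2, 3, 4, 5} by decide]
      simp [Finset.sum_insert, Finset.mem_insert]
      norm_num [show Nat.choose 6 2 = 15 by decide, show Nat.choose 6 3 = 20 by decide,
        show Nat.choose 6 4 = 15 by decide]
      push_cast
      nlinarith [mul_le_mul_of_nonneg_left h3 (pow_nonneg hβ0.le 5),
        mul_le_mul_of_nonneg_left h4 (pow_nonneg hβ0.le 5),
        pow_nonneg hβ0.le 5]
  · -- M ≥ 7
    have hm7 : (7:ℝ) ≤ (M:ℝ) := by exact_mod_cast hM7
    set m : ℝ := (M:ℝ) with hmdef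
    have hm1 : (0:ℝ) < m - 1 := by linarith
    have hm2 : (0:ℝ) < m - 2 := by linarith
    have hm3 : (0:ℝ) < m - 3 := by linarith
    set u : ℝ := Real.log (m-1) with hu
    set R : ℝ := 2*u/(m-2) - 1/(m-1) with hR
    have hβR : Real.log β₀ ≤ -R := by
      have e1 : Real.log (1/(m-1)) = -u := by rw [one_div, Real.log_inv]
      rw [e1] at hlog
      have e2 : 1/(m-1) + (2/(m-2))*(-u) = -R := by
        rw [hR]; field_simp; ring
      rw [← e2]; exact hlog
    have hstar : 2*u/(m-2) + (m-3)/(m-1) ≤ 2*Real.log 2 := by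
      rcases Nat.lt_or_ge M 8 with h8 | h8
      · have : M = 7 := by omega
        subst this
        have : m = 7 := by norm_num [hmdef]
        rw [hu, this]
        exact star7
      · exact star_ge8 m (by rw [hmdef]; exact_mod_cast h8)
    have hBp : 2*(u - Real.log 2) ≤ (m-3)*R := by
      have e3 : (m-3)*(2*u/(m-2)) = 2*u - 2*u/(m-2) := by
        field_simp; ring
      have e4 : (m-3)*R = 2*u - 2*u/(m-2) - (m-3)/(m-1) := by
        rw [hR]; rw [mul_sub, e3]; ring
      rw [e4]; linarith
    set A : ℝ := m + 1 with hA
    have hKc : ((M-3:ℕ):ℝ) = m - 3 := by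
      rw [Nat.cast_sub (by omega)]; norm_num
      exact hmdef.symm
    have hAK : ((M-3:ℕ):ℝ) + 4 ≤ A := by rw [hKc, hA]; linarith
    have hFK : F A (M-3) = u - Real.log 2 := by
      unfold F
      rw [hKc]
      have e5 : A + (m-3) = 2*(m-1) := by rw [hA]; ring
      have e6 : A - (m-3) = 4 := by rw [hA]; ring
      rw [e5, e6, Real.log_mul (by norm_num) (by linarith),
          show (4:ℝ) = 2^2 by norm_num, Real.log_pow]
      push_cast
      rw [hu]; ring
    -- ratio key
    have hratio : ∀ j : ℕ, 1 ≤ j → 2*j + 2 ≤ M →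
        (m - j)^2 * β₀^(M - 1 - 2*j) ≤ ((j:ℝ)+1)^2 := by
      intro j hj1 hj2
      set k : ℕ := M - 1 - 2*j with hk
      have hkc : (k:ℝ) + 1 + 2*(j:ℝ) = m := by
        have h9 : k + 1 + 2*j = M := by omega
        rw [hmdef]
        exact_mod_cast congrArg (Nat.cast : ℕ → ℝ) h9
      have hk1 : 1 ≤ k := by omega
      have hkK : k ≤ M - 3 := by omega
      have hk0 : (0:ℝ) ≤ (k:ℝ) := Nat.cast_nonneg k
      have hj0 : (0:ℝ) ≤ (j:ℝ) := Nat.cast_nonneg j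
      have hmj : (0:ℝ) < m - j := by nlinarith [hkc]
      have hKF := slope A (M-3) k hAK hk1 hkK
      have hE : 2 * F A k ≤ (k:ℝ) * R := by
        rw [hKc] at hKF
        have h1 : (m-3) * (2 * F A k) ≤ (k:ℝ) * (2 * F A (M-3)) := by linarith
        have h2 : (k:ℝ) * (2 * F A (M-3)) ≤ (k:ℝ) * ((m-3)*R) := by
          rw [hFK]
          have := mul_le_mul_of_nonneg_left hBp hk0
          linarith [this]
        have h3 : (m-3) * (2*F A k) ≤ (m-3) * ((k:ℝ)*R) := by
          have h4 : (m-3) * (2*F A k) ≤ (k:ℝ)*((m-3)*R) := le_trans h1 h2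
          have h5 : (k:ℝ)*((m-3)*R) = (m-3)*((k:ℝ)*R) := by ring
          linarith
        exact le_of_mul_le_mul_left h3 hm3
      have hFk : F A k = Real.log (m - j) - Real.log ((j:ℝ)+1) := by
        unfold F
        have e7 : A + (k:ℝ) = 2*(m - j) := by rw [hA]; linarith [hkc]
        have e8 : A - (k:ℝ) = 2*((j:ℝ)+1) := by rw [hA]; linarith [hkc]
        rw [e7, e8, Real.log_mul (by norm_num) (ne_of_gt hmj),
            Real.log_mul (by norm_num) (by positivity)]
        ring
      have hβk : β₀^k = Real.exp ((k:ℝ) * Real.log β₀) := by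
        rw [Real.exp_nat_mul, Real.exp_log hβ0]
      have hβkle : β₀^k ≤ Real.exp ((k:ℝ) * (-R)) := by
        rw [hβk]
        exact Real.exp_le_exp.2 (mul_le_mul_of_nonneg_left hβR hk0)
      have hexp2 : Real.exp ((k:ℝ) * (-R)) ≤ Real.exp (-(2 * F A k)) :=
        Real.exp_le_exp.2 (by linarith [hE])
      have hexp3 : Real.exp (-(2 * F A k)) = (((j:ℝ)+1)/(m-j))^2 := by
        rw [hFk]
        have : -(2 * (Real.log (m-j) - Real.log ((j:ℝ)+1)))
            = ((2:ℕ):ℝ) * (Real.log ((j:ℝ)+1) - Real.log (m-j)) := by push_cast; ring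
        rw [this, Real.exp_nat_mul, Real.exp_sub, Real.exp_log (by positivity),
            Real.exp_log hmj]
      have hfinal : β₀^k ≤ (((j:ℝ)+1)/(m-j))^2 := by
        rw [← hexp3]; exact le_trans hβkle hexp2
      have : (m - j)^2 * β₀^k ≤ (m - j)^2 * (((j:ℝ)+1)/(m-j))^2 :=
        mul_le_mul_of_nonneg_left hfinal (by positivity)
      calc (m - j)^2 * β₀^(M-1-2*j) = (m - j)^2 * β₀^k := by rw [hk]
        _ ≤ (m - j)^2 * (((j:ℝ)+1)/(m-j))^2 := this
        _ = ((j:ℝ)+1)^2 := by field_simp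
    -- per-term bound by induction
    have hperm : ∀ j : ℕ, 1 ≤ j → 2*j ≤ M →
        (M.choose j : ℝ)^2 * β₀^(j*(M-j)) ≤ m^2 * β₀^(M-1) := by
      intro j
      induction j with
      | zero => intro h; omega
      | succ n ih =>
        intro _ h2
        rcases Nat.eq_zero_or_pos n with hn0 | hn1
        · subst hn0
          simp only [Nat.choose_one_right, zero_add, one_mul]
          norm_num
          exact le_refl _
        · have hb := ih (by omega) (by omega)
          have hexp_id : (n+1)*(M-(n+1)) = n*(M-n) + (M-1-2*n) := by
            zify [show n+1 ≤ M by omega, show n ≤ M by omega,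
              show 2*n ≤ M-1 by omega, show 1 ≤ M by omega]
            ring
          have hmn : ((M - n:ℕ):ℝ) = m - n := by
            rw [Nat.cast_sub (by omega)]
          have hcc : ((M.choose (n+1)):ℝ) * ((n:ℝ)+1) = (M.choose n : ℝ) * (m - n) := by
            rw [← hmn]
            exact_mod_cast congrArg (Nat.cast : ℕ → ℝ) (Nat.choose_succ_right_eq M n)
          have hrat := hratio n (by omega) (by omega)
          have hn1' : (0:ℝ) < (n:ℝ)+1 := by positivity
          have hch0 : (0:ℝ) ≤ (M.choose n : ℝ) := Nat.cast_nonneg _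
          have hsq : ((M.choose (n+1)):ℝ)^2 * ((n:ℝ)+1)^2
              = (M.choose n : ℝ)^2 * (m - n)^2 := by
            have := congrArg (fun t : ℝ => t^2) hcc
            simpa [mul_pow] using this
          have h1 : ((M.choose (n+1)):ℝ)^2 * β₀^(M-1-2*n) ≤ (M.choose n : ℝ)^2 := by
            have h2' : ((M.choose (n+1)):ℝ)^2 * β₀^(M-1-2*n) * ((n:ℝ)+1)^2
                = (M.choose n : ℝ)^2 * ((m - n)^2 * β₀^(M-1-2*n)) := by
              linear_combination β₀^(M-1-2*n) * hsq
            have h3' : (M.choose n : ℝ)^2 * ((m - n)^2 * β₀^(M-1-2*n))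
                ≤ (M.choose n : ℝ)^2 * ((n:ℝ)+1)^2 := by
              apply mul_le_mul_of_nonneg_left hrat (by positivity)
            have h4' : ((M.choose (n+1)):ℝ)^2 * β₀^(M-1-2*n) * ((n:ℝ)+1)^2
                ≤ (M.choose n : ℝ)^2 * ((n:ℝ)+1)^2 := by linarith
            have := mul_le_mul_of_nonneg_right h4' (le_of_lt (by positivity : (0:ℝ) < (((n:ℝ)+1)^2)⁻¹))
            calc ((M.choose (n+1)):ℝ)^2 * β₀^(M-1-2*n)
                = ((M.choose (n+1)):ℝ)^2 * β₀^(M-1-2*n) * ((n:ℝ)+1)^2 * (((n:ℝ)+1)^2)⁻¹ := by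
                  field_simp
              _ ≤ (M.choose n : ℝ)^2 * ((n:ℝ)+1)^2 * (((n:ℝ)+1)^2)⁻¹ := this
              _ = (M.choose n : ℝ)^2 := by field_simp
          calc (M.choose (n+1) : ℝ)^2 * β₀^((n+1)*(M-(n+1)))
              = ((M.choose (n+1)):ℝ)^2 * β₀^(M-1-2*n) * β₀^(n*(M-n)) := by
                rw [hexp_id, pow_add]; ring
            _ ≤ (M.choose n : ℝ)^2 * β₀^(n*(M-n)) := by
                apply mul_le_mul_of_nonneg_right h1 (by positivity)
            _ ≤ m^2 * β₀^(M-1) := hb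
    -- symmetry and summation
    have hterm : ∀ i ∈ Finset.Icc 1 (M-1),
        (M.choose i : ℝ)^2 * β₀^(i*(M-i)) ≤ m^2 * β₀^(M-1) := by
      intro i hi
      rw [Finset.mem_Icc] at hi
      rcases le_or_gt (2*i) M with h | h
      · exact hperm i hi.1 h
      · have h1 : M.choose i = M.choose (M-i) := (Nat.choose_symm (by omega)).symm
        have h2 : i*(M-i) = (M-i)*(M-(M-i)) := by
          rw [Nat.sub_sub_self (by omega)]; ring
        rw [h1, h2]
        exact hperm (M-i) (by omega) (by omega)
    have hsum := Finset.sum_le_card_nsmul (Finset.Icc 1 (M-1)) _ _ hterm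
    rw [Nat.card_Icc] at hsum
    have hcard : (M - 1 + 1 - 1) = M - 1 := by omega
    rw [hcard, nsmul_eq_mul] at hsum
    have hle : ((M-1:ℕ):ℝ) ≤ m := by
      calc ((M-1:ℕ):ℝ) ≤ (M:ℝ) := by exact_mod_cast Nat.sub_le M 1
        _ = m := rfl
    have hpow : (0:ℝ) ≤ β₀^(M-1) := by positivity
    calc ∑ i ∈ Finset.Icc 1 (M - 1), (M.choose i : ℝ) ^ 2 * β₀ ^ (i * (M - i))
        ≤ ((M-1:ℕ):ℝ) * (m^2 * β₀^(M-1)) := hsum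
      _ ≤ m * (m^2 * β₀^(M-1)) := by
          apply mul_le_mul_of_nonneg_right hle (by positivity)
      _ = (M:ℝ)^3 * β₀^(M-1) := by rw [← hmdef]; ring
end

section
/- (Theorem 2) Let P, K, M be positive integers, δ > 0, ε ≥ 0 with κ = ε√P/δ < 1. Let x₁,…,x_{KM} ∈ ℝ^P be points partitioned into K ground-truth clusters of M points each, such that every pair of points from different clusters has ℓ₂ distance at least δ and every pair of points from the same cluster has ℓ∞ distance at most ε. Consider the fully observed optimization problem: minimize over u₁,…,u_{KM} ∈ ℝ^P the number of ordered pairs (i, j) with u_i ≠ u_j, subject to ‖x_i − u_i‖_∞ ≤ ε/2 for all i. Then this problem is feasible, and every minimizer (u₁*,…,u_{KM}*) satisfies u_i* = u_j* if and only if x_i and x_j belong to the same ground-truth cluster. -/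
/-- **Theorem 2: exact cluster recovery by the ℓ₀ fusion problem without missing entries.**
Let `κ = ε√P/δ < 1` and let `x₁,…,x_{KM} ∈ ℝ^P` be partitioned into `K` ground-truth
clusters of `M` points each (labels `c : Fin (KM) → Fin K`), with pairs from different
clusters at ℓ₂ distance `≥ δ` and pairs from the same cluster at ℓ∞ distance `≤ ε`.
Consider minimizing, over `u₁,…,u_{KM} ∈ ℝ^P`, the number of ordered pairs `(i, j)` with
`u_i ≠ u_j`, subject to `‖x_i − u_i‖_∞ ≤ ε/2` for all `i`.  Then the problem is feasible
and every minimizer satisfies `u_i = u_j` iff `x_i, x_j` belong to the same cluster.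
(The norm on `Fin P → ℝ` is the sup norm.) -/
theorem l0_clustering_recovery_no_missing (P K M : ℕ) (hP : 0 < P) (hK : 0 < K)
    (hM : 0 < M) (δ ε : ℝ) (hδ : 0 < δ) (hε : 0 ≤ ε)
    (hκ : ε * Real.sqrt P / δ < 1)
    (x : Fin (K * M) → Fin P → ℝ) (c : Fin (K * M) → Fin K)
    (hc : ∀ k : Fin K, (Finset.univ.filter fun i => c i = k).card = M)
    (hsep : ∀ i j : Fin (K * M), c i ≠ c j →
      Real.sqrt (∑ l, (x i l - x j l) ^ 2) ≥ δ)
    (hsame : ∀ i j : Fin (K * M), c i = c j → ‖x i - x j‖ ≤ ε) :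
    (∃ u : Fin (K * M) → Fin P → ℝ, ∀ i, ‖x i - u i‖ ≤ ε / 2) ∧
    (∀ u : Fin (K * M) → Fin P → ℝ,
      (∀ i, ‖x i - u i‖ ≤ ε / 2) →
      (∀ v : Fin (K * M) → Fin P → ℝ, (∀ i, ‖x i - v i‖ ≤ ε / 2) →
        Set.ncard {q : Fin (K * M) × Fin (K * M) | u q.1 ≠ u q.2} ≤
          Set.ncard {q : Fin (K * M) × Fin (K * M) | v q.1 ≠ v q.2}) →
      ∀ i j : Fin (K * M), u i = u j ↔ c i = c j) := by
  have hεP : ε * Real.sqrt P < δ := (div_lt_one hδ).mp hκ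
  -- Key fact: any feasible u separates different clusters.
  have key : ∀ u : Fin (K * M) → Fin P → ℝ, (∀ i, ‖x i - u i‖ ≤ ε / 2) →
      ∀ i j, c i ≠ c j → u i ≠ u j := by
    intro u hu i j hcij huij
    have hxij : ‖x i - x j‖ ≤ ε := by
      have hrw : (x i - u i) - (x j - u j) = x i - x j := by
        rw [huij]; exact sub_sub_sub_cancel_right _ _ _
      calc ‖x i - x j‖ = ‖(x i - u i) - (x j - u j)‖ := by rw [hrw]
        _ ≤ ‖x i - u i‖ + ‖x j - u j‖ := norm_sub_le _ _
        _ ≤ ε / 2 + ε / 2 := add_le_add (hu i) (hu j)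
        _ = ε := by ring
    have hcoord : ∀ l, (x i l - x j l) ^ 2 ≤ ε ^ 2 := by
      intro l
      have h0 : ‖(x i - x j) l‖ ≤ ‖x i - x j‖ := norm_le_pi_norm _ l
      have h1 : |x i l - x j l| ≤ ε := by
        simpa [Real.norm_eq_abs] using h0.trans hxij
      nlinarith [abs_nonneg (x i l - x j l), sq_abs (x i l - x j l),
        sq_le_sq' (neg_le_of_abs_le h1) (le_of_abs_le h1)]
    have hsum : ∑ l, (x i l - x j l) ^ 2 ≤ P * ε ^ 2 := by
      calc ∑ l, (x i l - x j l) ^ 2 ≤ ∑ _l : Fin P, ε ^ 2 :=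
            Finset.sum_le_sum fun l _ => hcoord l
        _ = P * ε ^ 2 := by simp [mul_comm]
    have h2 : Real.sqrt (∑ l, (x i l - x j l) ^ 2) ≤ ε * Real.sqrt P := by
      calc Real.sqrt (∑ l, (x i l - x j l) ^ 2) ≤ Real.sqrt (P * ε ^ 2) :=
            Real.sqrt_le_sqrt hsum
        _ = ε * Real.sqrt P := by
            rw [Real.sqrt_mul (by positivity), Real.sqrt_sq hε]; ring
    have := hsep i j hcij
    linarith
  -- Cluster (Chebyshev) centers.
  have hSne : ∀ k : Fin K, (Finset.univ.filter fun i => c i = k).Nonempty := by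
    intro k
    rw [← Finset.card_pos, hc k]; exact hM
  let m : Fin K → Fin P → ℝ := fun k l =>
    (((Finset.univ.filter fun i => c i = k).sup' (hSne k) fun i => x i l) +
     ((Finset.univ.filter fun i => c i = k).inf' (hSne k) fun i => x i l)) / 2
  have hvfeas : ∀ i, ‖x i - m (c i)‖ ≤ ε / 2 := by
    intro i
    rw [pi_norm_le_iff_of_nonneg (by linarith)]
    intro l
    have hiS : i ∈ Finset.univ.filter fun j => c j = c i := by simp
    have hle1 : x i l ≤ (Finset.univ.filter fun j => c j = c i).sup' (hSne (c i))
        fun j => x j l := Finset.le_sup' (fun j => x j l) hiS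
    have hle2 : ((Finset.univ.filter fun j => c j = c i).inf' (hSne (c i))
        fun j => x j l) ≤ x i l := Finset.inf'_le (fun j => x j l) hiS
    obtain ⟨a, haS, ha⟩ := Finset.exists_mem_eq_sup'
      (hSne (c i)) (fun j : Fin (K * M) => x j l)
    obtain ⟨b, hbS, hb⟩ := Finset.exists_mem_eq_inf'
      (hSne (c i)) (fun j : Fin (K * M) => x j l)
    have hca : c a = c i := (Finset.mem_filter.mp haS).2
    have hcb : c b = c i := (Finset.mem_filter.mp hbS).2
    have hab : ‖x a - x b‖ ≤ ε := hsame a b (hca.trans hcb.symm)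
    have h0 : ‖(x a - x b) l‖ ≤ ‖x a - x b‖ := norm_le_pi_norm _ l
    have habl : x a l - x b l ≤ ε := by
      have h1 : |x a l - x b l| ≤ ε := by
        simpa [Real.norm_eq_abs] using h0.trans hab
      linarith [(abs_le.mp h1).2]
    have hml : m (c i) l =
        (((Finset.univ.filter fun j => c j = c i).sup' (hSne (c i)) fun j => x j l) +
         ((Finset.univ.filter fun j => c j = c i).inf' (hSne (c i)) fun j => x j l)) / 2 := rfl
    rw [Pi.sub_apply, Real.norm_eq_abs, abs_le, hml]
    rw [ha] at hle1 ⊢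
    rw [hb] at hle2 ⊢
    constructor <;> linarith
  -- The oracle assignment v.
  set v : Fin (K * M) → Fin P → ℝ := fun i => m (c i) with hv
  have hvset : {q : Fin (K * M) × Fin (K * M) | v q.1 ≠ v q.2} =
      {q : Fin (K * M) × Fin (K * M) | c q.1 ≠ c q.2} := by
    ext q
    simp only [Set.mem_setOf_eq, hv]
    constructor
    · intro h hcq; exact h (congrArg m hcq)
    · intro hcq; exact key v hvfeas q.1 q.2 hcq
  refine ⟨⟨x, fun i => by simp; linarith⟩, ?_⟩
  intro u hu hmin i j
  have hsub : {q : Fin (K * M) × Fin (K * M) | c q.1 ≠ c q.2} ⊆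
      {q : Fin (K * M) × Fin (K * M) | u q.1 ≠ u q.2} :=
    fun q hq => key u hu q.1 q.2 hq
  have hle := hmin v hvfeas
  rw [hvset] at hle
  have heq := Set.eq_of_subset_of_ncard_le hsub hle (Set.toFinite _)
  constructor
  · intro h
    by_contra hne
    have hmem : (i, j) ∈ {q : Fin (K * M) × Fin (K * M) | c q.1 ≠ c q.2} := hne
    rw [heq] at hmem
    exact hmem h
  · intro h
    by_contra hne
    have hmem : (i, j) ∈ {q : Fin (K * M) × Fin (K * M) | u q.1 ≠ u q.2} := hne
    rw [← heq] at hmem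
    exact hmem h
end
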